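/- For n ≥ 4 and the cyclic system defining pure kinematic shifts, the vectors v_i = Σ_{j=0}^{n/g - 1} (e^{[i+gj, i+gj+k-1]} - e^{[i+gj+1, i+gj+k]}) ∈ ℝ^n for i = 1, ..., g-1 (where e^{[a,b]} denotes the indicator vector of the cyclic window, recorded as the coefficient vector (c_1,...,c_n) with c_j the coefficient of the window starting at j) are linearly independent, where g = gcd(k,n). -/
import Mathlib


/-- With `g = gcd(k,n)`, the coefficient vectors `v_i ∈ ℝ^n` (`i = 1, …, g-1`) with entry `+1`
at the positions `≡ i (mod g)` and `-1` at the positions `≡ i+1 (mod g)` are linearly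
independent. -/
theorem pure_shift_vectors_linearIndependent (k n : ℕ) (hk : 0 < k) (hn : 4 ≤ n)
    (hkn : k ≤ n) :
    LinearIndependent ℝ (fun i : Fin (Nat.gcd k n - 1) => (fun m : ZMod n =>
      (if m.val % Nat.gcd k n = (i.val + 1) % Nat.gcd k n then (1 : ℝ) else 0)
        - (if m.val % Nat.gcd k n = (i.val + 2) % Nat.gcd k n then (1 : ℝ) else 0))) := by
  have hg0 : 0 < Nat.gcd k n := Nat.gcd_pos_of_pos_left n hk
  have hn0 : 0 < n := by omega
  have hgn : Nat.gcd k n ≤ n := Nat.le_of_dvd hn0 (Nat.gcd_dvd_right k n)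
  set g := Nat.gcd k n with hg
  rw [Fintype.linearIndependent_iff]
  intro c hc
  have eval : ∀ r : ℕ, r < g →
      ∑ j : Fin (g - 1), c j *
        ((if r = (j.val + 1) % g then (1 : ℝ) else 0)
          - (if r = (j.val + 2) % g then (1 : ℝ) else 0)) = 0 := by
    intro r hrg
    have h1 : ((r : ZMod n)).val = r := ZMod.val_cast_of_lt (by omega)
    have h2 := congrFun hc ((r : ℕ) : ZMod n)
    simpa [Finset.sum_apply, h1, Nat.mod_eq_of_lt hrg, smul_eq_mul] using h2
  have main : ∀ r : ℕ, ∀ hr : r < g - 1, c ⟨r, hr⟩ = 0 := by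
    intro r
    induction r with
    | zero =>
      intro hr
      have h := eval 1 (by omega)
      have hterm : ∀ j : Fin (g - 1),
          c j * ((if 1 = (j.val + 1) % g then (1 : ℝ) else 0)
            - (if 1 = (j.val + 2) % g then (1 : ℝ) else 0))
          = if j = ⟨0, hr⟩ then c j else 0 := by
        intro j
        have hj : j.val < g - 1 := j.isLt
        have e1 : (j.val + 1) % g = j.val + 1 := Nat.mod_eq_of_lt (by omega)
        have e2 : (1 : ℕ) ≠ (j.val + 2) % g := by
          rcases Nat.lt_or_ge (j.val + 2) g with h' | h'
          · rw [Nat.mod_eq_of_lt h']; omega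
          · have hje : j.val + 2 = g := by omega
            rw [hje, Nat.mod_self]; omega
        rw [e1, if_neg e2, sub_zero]
        by_cases hj0 : j = ⟨0, hr⟩
        · have hv : (j : ℕ) = 0 := by rw [hj0]
          rw [if_pos hj0, if_pos (by omega), mul_one]
        · have hv : (j : ℕ) ≠ 0 := by
            intro h'
            exact hj0 (Fin.ext (by simp only [Fin.val_mk]; omega))
          rw [if_neg (by omega), if_neg hj0, mul_zero]
      rw [Finset.sum_congr rfl (fun j _ => hterm j), Finset.sum_ite_eq' Finset.univ] at h
      simpa using h
    | succ p ih =>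
      intro hr
      have hp := ih (by omega)
      have h := eval (p + 2) (by omega)
      have hterm : ∀ j : Fin (g - 1),
          c j * ((if p + 2 = (j.val + 1) % g then (1 : ℝ) else 0)
            - (if p + 2 = (j.val + 2) % g then (1 : ℝ) else 0))
          = (if j = ⟨p + 1, hr⟩ then c j else 0)
            - (if j = ⟨p, by omega⟩ then c j else 0) := by
        intro j
        have hj : j.val < g - 1 := j.isLt
        have e1 : (j.val + 1) % g = j.val + 1 := Nat.mod_eq_of_lt (by omega)
        rw [e1, mul_sub]
        congr 1
        · by_cases hj0 : j = ⟨p + 1, hr⟩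
          · have hv : (j : ℕ) = p + 1 := by rw [hj0]
            rw [if_pos hj0, if_pos (by omega), mul_one]
          · have hv : (j : ℕ) ≠ p + 1 := by
              intro h'
              exact hj0 (Fin.ext (by simp only [Fin.val_mk]; omega))
            rw [if_neg (by omega), if_neg hj0, mul_zero]
        · rcases Nat.lt_or_ge (j.val + 2) g with h' | h'
          · rw [Nat.mod_eq_of_lt h']
            by_cases hj0 : j = ⟨p, by omega⟩
            · have hv : (j : ℕ) = p := by rw [hj0]
              rw [if_pos hj0, if_pos (by omega), mul_one]
            · have hv : (j : ℕ) ≠ p := by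
                intro h''
                exact hj0 (Fin.ext (by simp only [Fin.val_mk]; omega))
              rw [if_neg (by omega), if_neg hj0, mul_zero]
          · have hje : j.val + 2 = g := by omega
            have : p + 2 ≠ (j.val + 2) % g := by
              rw [hje, Nat.mod_self]; omega
            have hj0 : j ≠ ⟨p, by omega⟩ := by
              intro h''
              have hv : (j : ℕ) = p := by rw [h'']
              omega
            rw [if_neg this, if_neg hj0, mul_zero]
      rw [Finset.sum_congr rfl (fun j _ => hterm j), Finset.sum_sub_distrib,
        Finset.sum_ite_eq' Finset.univ, Finset.sum_ite_eq' Finset.univ] at h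
      simp only [Finset.mem_univ, if_true] at h
      have : c ⟨p + 1, hr⟩ = c ⟨p, by omega⟩ := by linarith
      rw [this]
      exact hp
  intro i
  have := main i.val i.isLt
  simpa using this
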